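/- Let u and v be nonempty finite words over the positive integers such that the complex matrices A_u and A_v have a common eigenvector z ∈ ℂ² ∖ {0}. Then there exist a finite word t and positive integers m₁, m₂ such that u = t^{m₁} (t concatenated with itself m₁ times) and v = t^{m₂}; moreover, z is also an eigenvector of A_t. -/

import Mathlib

open Matrix Filter

/-- The matrix `A_a = [[0,1],[1,a]]` associated to a letter `a`. -/
def Amat (a : ℕ) : Matrix (Fin 2) (Fin 2) ℤ := !![0, 1; 1, (a : ℤ)]

/-- The matrix `A_u` associated to a finite word `u` (product of the `A_a`). -/
def Aword (u : List ℕ) : Matrix (Fin 2) (Fin 2) ℤ := (u.map Amat).prod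

/-- The prefix of length `n` of an infinite word `w`. -/
def wordPrefix (w : ℕ → ℕ) (n : ℕ) : List ℕ := (List.range n).map w

/-- The left shift `T^m w` of an infinite word. -/
def shiftW (w : ℕ → ℕ) (m : ℕ) : ℕ → ℕ := fun i => w (m + i)

/-- Distance from a real number to the nearest integer. -/
noncomputable def distNearestInt (t : ℝ) : ℝ := |t - round t|

/-- `q ∈ PBad_ε` : `q` is a `p`-adically badly approximable vector with constant `ε`. -/
def PBadE (p : ℕ) [Fact p.Prime] (ε : ℝ) (q : Fin 2 → ℚ_[p]) : Prop :=
  ∀ a b : ℤ, ¬(a = 0 ∧ b = 0) →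
    ε / max ((a : ℝ) ^ 2) ((b : ℝ) ^ 2) ≤
      ‖(a : ℚ_[p]) * q 0 + (b : ℚ_[p]) * q 1‖ / max ‖q 0‖ ‖q 1‖

/-- An integer matrix viewed as a matrix over `ℚ_[p]`. -/
noncomputable def matQ (p : ℕ) [Fact p.Prime] (M : Matrix (Fin 2) (Fin 2) ℤ) :
    Matrix (Fin 2) (Fin 2) ℚ_[p] := M.map Int.cast

/-- `(w, y) ∈ LMad_ε`. -/
def LMadE (p : ℕ) [Fact p.Prime] (ε : ℝ) (w : ℕ → ℕ) (y : Fin 2 → ℚ_[p]) : Prop :=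
  (∀ n, 1 ≤ w n ∧ (w n : ℤ) ≤ ⌊ε⁻¹⌋ + 1) ∧
  ∀ n : ℕ, PBadE p ε (Matrix.mulVec (matQ p (Aword (wordPrefix w n))ᵀ) y)

/-- `(w, y) ∈ LMad`. -/
def LMad (p : ℕ) [Fact p.Prime] (w : ℕ → ℕ) (y : Fin 2 → ℚ_[p]) : Prop :=
  ∃ ε > 0, LMadE p ε w y

/-- The projective distance `d` on nonzero vectors of `ℚ_[p]²`. -/
noncomputable def pdist (p : ℕ) [Fact p.Prime] (u v : Fin 2 → ℚ_[p]) : ℝ :=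
  ‖u 0 * v 1 - u 1 * v 0‖ / (max ‖u 0‖ ‖u 1‖ * max ‖v 0‖ ‖v 1‖)

/-- `q ∈ B_k(w, y)` : `q` is `p^{-k}`-close to some `(A_{w_n})ᵀ y`. -/
def inBk (p : ℕ) [Fact p.Prime] (k : ℕ) (w : ℕ → ℕ) (y : Fin 2 → ℚ_[p])
    (q : Fin 2 → ℚ_[p]) : Prop :=
  q ≠ 0 ∧ ∃ n : ℕ,
    pdist p q (Matrix.mulVec (matQ p (Aword (wordPrefix w n))ᵀ) y) ≤ (p : ℝ) ^ (-(k : ℤ))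

/-- `U_k(w)` : set of reductions mod `p^k` of the matrices of all prefixes of `w`. -/
def Uk (p k : ℕ) (w : ℕ → ℕ) : Set (Matrix (Fin 2) (Fin 2) (ZMod (p ^ k))) :=
  { M | ∃ n : ℕ, M = (Aword (wordPrefix w n)).map Int.cast }

/-- The finite word `u` occurs in `w` at position `m`. -/
def occursAt (w : ℕ → ℕ) (u : List ℕ) (m : ℕ) : Prop :=
  u = (List.range u.length).map fun i => w (m + i)

/-- `u` is a factor of the infinite word `w`. -/
def IsFactor (u : List ℕ) (w : ℕ → ℕ) : Prop := ∃ m, occursAt w u m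

/-- `w` is recurrent: every factor occurs infinitely often. -/
def Recurrent (w : ℕ → ℕ) : Prop :=
  ∀ u : List ℕ, IsFactor u w → ∀ M : ℕ, ∃ m, M ≤ m ∧ occursAt w u m

/-- `w` is uniformly recurrent: recurrent with bounded gaps between occurrences. -/
def UniformlyRecurrent (w : ℕ → ℕ) : Prop :=
  Recurrent w ∧
    ∀ u : List ℕ, IsFactor u w →
      ∃ d : ℕ, ∀ m : ℕ, ∃ m', m ≤ m' ∧ m' ≤ m + d ∧ occursAt w u m'

/-- The complexity `P(w, n)` : number of distinct factors of `w` of length `n`. -/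
noncomputable def complexity (w : ℕ → ℕ) (n : ℕ) : ℕ :=
  Set.ncard { u : List ℕ | u.length = n ∧ IsFactor u w }

/-- `a` is the sequence of partial quotients of the continued fraction expansion of `x`,
obtained by iterating the Gauss map. -/
def IsCFSeq (x : ℝ) (a : ℕ → ℕ) : Prop :=
  ∃ ξ : ℕ → ℝ, ξ 0 = x ∧
    ∀ n, (0 < ξ n ∧ ξ n < 1) ∧ ((a n : ℤ) = ⌊(ξ n)⁻¹⌋) ∧ ξ (n + 1) = (ξ n)⁻¹ - (a n : ℝ)

/-- `Q` is the (index-shifted) sequence of denominators of the convergents of the continued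
fraction with partial quotients `a` : `Q (n+1)` is the paper's `q_n`. -/
def IsCFDen (a : ℕ → ℕ) (Q : ℕ → ℤ) : Prop :=
  Q 0 = 0 ∧ Q 1 = 1 ∧ ∀ n, Q (n + 2) = (a n : ℤ) * Q (n + 1) + Q n

lemma Aword_nil : Aword [] = 1 := rfl

lemma Aword_cons (a : ℕ) (w : List ℕ) : Aword (a :: w) = Amat a * Aword w := by
  simp [Aword]

lemma Aword_append (x y : List ℕ) : Aword (x ++ y) = Aword x * Aword y := by
  simp [Aword]

lemma Aword_entries {w : List ℕ} (hw : w ≠ []) (hpos : ∀ b ∈ w, 1 ≤ b) :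
    0 ≤ Aword w 0 0 ∧ 1 ≤ Aword w 0 1 ∧ 1 ≤ Aword w 1 0 ∧ 1 ≤ Aword w 1 1 ∧
    Aword w 0 0 ≤ Aword w 1 0 ∧ Aword w 0 1 ≤ Aword w 1 1 := by
  induction w with
  | nil => simp at hw
  | cons a w ih =>
    have ha : (1:ℤ) ≤ (a:ℤ) := by exact_mod_cast hpos a (by simp)
    rcases eq_or_ne w [] with rfl | hw'
    · simp [Aword_cons, Aword_nil, Amat, Matrix.mul_apply, Fin.sum_univ_two]
      omega
    · obtain ⟨h1, h2, h3, h4, h5, h6⟩ := ih hw' (fun b hb => hpos b (by simp [hb]))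
      simp only [Aword_cons, Amat, Matrix.mul_apply, Fin.sum_univ_two] at *
      simp [Matrix.cons_val_zero, Matrix.cons_val_one]
      constructor
      · nlinarith
      constructor
      · nlinarith
      constructor
      · nlinarith
      constructor
      · nlinarith
      constructor
      · nlinarith
      · nlinarith

lemma Aword_det (w : List ℕ) : (Aword w).det = (-1) ^ w.length := by
  induction w with
  | nil => simp [Aword_nil]
  | cons a w ih =>
    rw [Aword_cons, Matrix.det_mul, ih]
    simp [Amat, Matrix.det_fin_two]
    ring

-- trace bound: for nonempty positive w, 1 ≤ trace, and if length ≥ 2 then 3 ≤ trace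

lemma Aword_trace {w : List ℕ} (hw : w ≠ []) (hpos : ∀ b ∈ w, 1 ≤ b) :
    1 ≤ Aword w 0 0 + Aword w 1 1 ∧ (2 ≤ w.length → 3 ≤ Aword w 0 0 + Aword w 1 1) := by
  match w, hw with
  | [a], _ =>
    have ha : (1:ℤ) ≤ (a:ℤ) := by exact_mod_cast hpos a (by simp)
    constructor
    · simp [Aword_cons, Aword_nil, Amat, Matrix.mul_apply, Fin.sum_univ_two]; omega
    · simp
  | a :: b :: w', _ =>
    have ha : (1:ℤ) ≤ (a:ℤ) := by exact_mod_cast hpos a (by simp)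
    obtain ⟨h1, h2, h3, h4, h5, h6⟩ := Aword_entries (w := b :: w') (by simp)
      (fun c hc => hpos c (by simp at hc ⊢; tauto))
    have e00 : Aword (a :: b :: w') 0 0 = Aword (b :: w') 1 0 := by
      simp [Aword_cons (a := a), Amat, Matrix.mul_apply, Fin.sum_univ_two]
    have e11 : Aword (a :: b :: w') 1 1 = Aword (b :: w') 0 1 + a * Aword (b :: w') 1 1 := by
      simp [Aword_cons (a := a), Amat, Matrix.mul_apply, Fin.sum_univ_two]
    constructor
    · rw [e00, e11]; nlinarith
    · intro _; rw [e00, e11]; nlinarith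

lemma Binv_Amat (a : ℕ) : !![-(a:ℤ), 1; 1, 0] * Amat a = 1 := by
  simp [Amat, Matrix.mul_fin_two, Matrix.one_fin_two]

lemma Aword_inj : ∀ (x y : List ℕ), (∀ b ∈ x, 1 ≤ b) → (∀ b ∈ y, 1 ≤ b) →
    x.length = y.length → Aword x = Aword y → x = y := by
  intro x
  induction x with
  | nil => intro y _ _ hl _; cases y <;> simp_all
  | cons a x' ih =>
    intro y hx hy hl hA
    match y with
    | [] => simp at hl
    | b :: y' =>
      have key : Aword x' = !![(1:ℤ), (b:ℤ) - a; 0, 1] * Aword y' := by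
        have h2 : !![-(a:ℤ), 1; 1, 0] * (Amat a * Aword x')
            = !![-(a:ℤ), 1; 1, 0] * (Amat b * Aword y') := by
          rw [← Aword_cons, ← Aword_cons, hA]
        rw [← mul_assoc, ← mul_assoc, Binv_Amat, one_mul] at h2
        rw [h2]
        congr 1
        simp [Amat, Matrix.mul_fin_two]
        rw [neg_add_eq_sub]
      rcases eq_or_ne a b with rfl | hab
      · have hone : !![(1:ℤ), (a:ℤ) - a; 0, 1] = 1 := by
          norm_num
          rw [← Matrix.one_fin_two]
        rw [hone, one_mul] at key
        have := ih y' (fun c hc => hx c (by simp [hc])) (fun c hc => hy c (by simp [hc]))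
          (by simpa using hl) key
        rw [this]
      · exfalso
        have hc : (b:ℤ) - a ≠ 0 := by
          intro h
          have h' : (b:ℤ) = a := by omega
          have : b = a := by exact_mod_cast h'
          exact hab this.symm
        rcases eq_or_ne x' [] with rfl | hx'
        · have hy' : y' = [] := List.length_eq_zero_iff.mp (by simpa using hl.symm)
          subst hy'
          have h01 := congrArg (fun M : Matrix (Fin 2) (Fin 2) ℤ => M 0 1) key
          simp [Aword_nil, Matrix.mul_apply, Fin.sum_univ_two, Matrix.one_apply] at h01
          exact hc h01.symm
        · have hy' : y' ≠ [] := by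
            intro h
            apply hx'
            have hlen : x'.length = y'.length := by simpa using hl
            rw [h] at hlen
            exact List.length_eq_zero_iff.mp (by simpa using hlen)
          obtain ⟨x1, x2, x3, x4, x5, x6⟩ := Aword_entries hx'
            (fun c hc => hx c (by simp [hc]))
          obtain ⟨y1, y2, y3, y4, y5, y6⟩ := Aword_entries hy'
            (fun c hc => hy c (by simp [hc]))
          have e01 : Aword x' 0 1 = Aword y' 0 1 + ((b:ℤ) - a) * Aword y' 1 1 := by
            have := congrArg (fun M : Matrix (Fin 2) (Fin 2) ℤ => M 0 1) key
            simpa [Matrix.mul_apply, Fin.sum_univ_two] using this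
          have e11 : Aword x' 1 1 = Aword y' 1 1 := by
            have := congrArg (fun M : Matrix (Fin 2) (Fin 2) ℤ => M 1 1) key
            simpa [Matrix.mul_apply, Fin.sum_univ_two] using this
          rcases lt_or_gt_of_ne hc with h | h
          · nlinarith
          · nlinarith

lemma flatten_replicate_add (k l : ℕ) (t : List ℕ) :
    (List.replicate (k + l) t).flatten
      = (List.replicate k t).flatten ++ (List.replicate l t).flatten := by
  rw [List.replicate_add, List.flatten_append]

lemma comm_words : ∀ n (u v : List ℕ), u.length + v.length ≤ n → u ++ v = v ++ u →
    ∃ (t : List ℕ) (k l : ℕ), u = (List.replicate k t).flatten ∧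
      v = (List.replicate l t).flatten := by
  intro n
  induction n with
  | zero =>
    intro u v hn _
    have hu : u = [] := List.length_eq_zero_iff.mp (by omega)
    have hv : v = [] := List.length_eq_zero_iff.mp (by omega)
    exact ⟨[], 0, 0, by simp [hu], by simp [hv]⟩
  | succ n ih =>
    intro u v hn hc
    rcases eq_or_ne u [] with rfl | hu
    · exact ⟨v, 0, 1, by simp, by simp⟩
    rcases eq_or_ne v [] with rfl | hv
    · exact ⟨u, 1, 0, by simp, by simp⟩
    rcases le_total u.length v.length with hle | hle
    · -- u is a prefix of v
      have hpu : u <+: v := by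
        apply List.prefix_of_prefix_length_le (l₃ := v ++ u)
        · exact ⟨v, hc⟩
        · exact ⟨u, rfl⟩
        · exact hle
      obtain ⟨w, hw⟩ := hpu
      have hc' : u ++ w = w ++ u := by
        have : u ++ (u ++ w) = (u ++ w) ++ u := by rw [hw]; exact hc
        rw [List.append_assoc] at this
        exact List.append_cancel_left this
      have hlen : u.length + w.length ≤ n := by
        have h1 : 1 ≤ u.length := by
          rcases u with _ | ⟨a, u⟩; · simp at hu
          simp
        have h2 : v.length = u.length + w.length := by rw [← hw]; simp
        omega
      obtain ⟨t, k, l, h1, h2⟩ := ih u w hlen hc'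
      exact ⟨t, k, k + l, h1, by rw [← hw, flatten_replicate_add, h1, h2]⟩
    · have hpv : v <+: u := by
        apply List.prefix_of_prefix_length_le (l₃ := u ++ v)
        · exact ⟨u, hc.symm⟩
        · exact ⟨v, rfl⟩
        · exact hle
      obtain ⟨w, hw⟩ := hpv
      have hc' : v ++ w = w ++ v := by
        have : v ++ (v ++ w) = (v ++ w) ++ v := by rw [hw]; exact hc.symm
        rw [List.append_assoc] at this
        exact List.append_cancel_left this
      have hlen : v.length + w.length ≤ n := by
        have h1 : 1 ≤ v.length := by
          rcases v with _ | ⟨a, v⟩; · simp at hv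
          simp
        have h2 : u.length = v.length + w.length := by rw [← hw]; simp
        omega
      obtain ⟨t, k, l, h1, h2⟩ := ih v w hlen hc'
      exact ⟨t, k + l, k, by rw [← hw, flatten_replicate_add, h1, h2], h1⟩

lemma AwordTD {w : List ℕ} (hw : w ≠ []) (hpos : ∀ b ∈ w, 1 ≤ b) :
    ((Aword w).det = 1 ∨ (Aword w).det = -1) ∧ 1 ≤ Aword w 0 0 + Aword w 1 1 ∧
      ((Aword w).det = 1 → 3 ≤ Aword w 0 0 + Aword w 1 1) := by
  have hd := Aword_det w
  have ht := Aword_trace hw hpos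
  rcases Nat.even_or_odd w.length with he | ho
  · have : (Aword w).det = 1 := by rw [hd]; exact he.neg_one_pow
    refine ⟨Or.inl this, ht.1, fun _ => ht.2 ?_⟩
    rcases he with ⟨c, hc⟩
    have : w.length ≠ 0 := fun h => hw (List.length_eq_zero_iff.mp h)
    omega
  · have h1 : (Aword w).det = -1 := by rw [hd]; exact ho.neg_one_pow
    exact ⟨Or.inr h1, ht.1, fun h => by rw [h1] at h; omega⟩

lemma no_rat_eig {t d : ℤ} (hd : d = 1 ∨ d = -1) (ht : 1 ≤ t) (h3 : d = 1 → 3 ≤ t)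
    (l : ℂ) (hl : l ^ 2 - (t : ℂ) * l + (d : ℂ) = 0) (a b : ℤ) (hb : b ≠ 0)
    (hlab : l * (b : ℂ) = (a : ℂ)) : False := by
  have hkeyC : ((a : ℂ))^2 - (t:ℂ)*a*b + (d:ℂ)*b^2 = 0 := by
    rw [← hlab]
    calc (l*(b:ℂ))^2 - (t:ℂ)*(l*b)*b + (d:ℂ)*b^2 = (b:ℂ)^2 * (l^2 - t*l + d) := by ring
    _ = 0 := by rw [hl, mul_zero]
  have key : a^2 - t*a*b + d*b^2 = 0 := by exact_mod_cast hkeyC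
  set n : ℤ := 2*a - t*b with hn
  have hsq : n^2 = (t^2 - 4*d) * b^2 := by linear_combination 4 * key
  have hdvd : b ∣ n := by
    rw [← Int.pow_dvd_pow_iff (two_ne_zero)]
    exact ⟨t^2 - 4*d, by linear_combination hsq⟩
  obtain ⟨m, hm⟩ := hdvd
  have hm2 : m^2 = t^2 - 4*d := by
    have h1 : b^2 * m^2 = b^2 * (t^2 - 4*d) := by rw [hm] at hsq; linear_combination hsq
    exact mul_left_cancel₀ (pow_ne_zero 2 hb) h1
  set M : ℤ := (m.natAbs : ℤ) with hM
  have hM0 : 0 ≤ M := by positivity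
  have hMsq : M^2 = t^2 - 4*d := by
    rw [hM, ← Int.abs_eq_natAbs, sq_abs, hm2]
  rcases hd with rfl | rfl
  · -- M^2 = t^2 - 4, t ≥ 3
    have ht3 := h3 rfl
    have hlt : M ≤ t - 1 := by nlinarith
    nlinarith
  · -- M^2 = t^2 + 4, t ≥ 1
    have hgt : t + 1 ≤ M := by nlinarith
    have ht1 : t ≤ 1 := by nlinarith
    have : t = 1 := by omega
    subst this
    have h5 : M^2 = 5 := by omega
    rcases (by omega : M ≤ 2 ∨ 3 ≤ M) with h | h <;> nlinarith

lemma no_int_eigvec {w : List ℕ} (hw : w ≠ []) (hpos : ∀ b ∈ w, 1 ≤ b)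
    (q : Fin 2 → ℤ) (hq : q ≠ 0) (l : ℂ)
    (h : Matrix.mulVec ((Aword w).map (Int.cast : ℤ → ℂ)) (fun i => (q i : ℂ))
      = l • (fun i => (q i : ℂ))) : False := by
  obtain ⟨htd, htr, h3⟩ := AwordTD hw hpos
  set A := Aword w with hA
  set N : Matrix (Fin 2) (Fin 2) ℂ := A.map (Int.cast : ℤ → ℂ) with hN
  set qc : Fin 2 → ℂ := fun i => (q i : ℂ) with hqc
  have hqc0 : qc ≠ 0 := by
    intro h0
    apply hq
    funext i
    have := congrFun h0 i
    simpa [hqc] using this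
  -- characteristic equation
  have hker : (N - l • 1).mulVec qc = 0 := by
    rw [Matrix.sub_mulVec, h, Matrix.smul_mulVec, Matrix.one_mulVec, sub_self]
  have hdet : (N - l • 1).det = 0 :=
    (Matrix.exists_mulVec_eq_zero_iff).mp ⟨qc, hqc0, hker⟩
  have hchar : l ^ 2 - ((A 0 0 + A 1 1 : ℤ) : ℂ) * l + ((A.det : ℤ) : ℂ) = 0 := by
    rw [← hdet]
    simp [hN, Matrix.det_fin_two, Matrix.sub_apply, Matrix.smul_apply, Matrix.one_apply,
      Matrix.map_apply]
    push_cast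
    ring
  obtain ⟨i, hi⟩ := Function.ne_iff.mp hq
  have hi' : q i ≠ 0 := by simpa using hi
  have hcomp := congrFun h i
  have hlab : l * ((q i : ℤ) : ℂ) = ((A.mulVec q i : ℤ) : ℂ) := by
    have h1 : (N *ᵥ qc) i = ((A.mulVec q i : ℤ) : ℂ) := by
      simp [hN, hqc, Matrix.mulVec, dotProduct, Fin.sum_univ_two, Matrix.map_apply]
    have h2 : (l • qc) i = l * ((q i : ℤ) : ℂ) := by simp [hqc]
    rw [← h2, ← hcomp, h1]
  have hch : l ^ 2 - ((A 0 0 + A 1 1 : ℤ) : ℂ) * l + ((A.det : ℤ) : ℂ) = 0 := hchar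
  exact no_rat_eig htd htr h3 l hch (A.mulVec q i) (q i) hi' hlab

lemma cayley2 (M : Matrix (Fin 2) (Fin 2) ℂ) :
    M * M = (M 0 0 + M 1 1) • M - M.det • 1 := by
  ext i j
  fin_cases i <;> fin_cases j <;>
    simp [Matrix.mul_apply, Fin.sum_univ_two, Matrix.det_fin_two, Matrix.smul_apply,
      Matrix.sub_apply, Matrix.one_apply] <;> ring

def sseq (t d : ℤ) : ℕ → ℤ × ℤ
  | 0 => (0, 1)
  | n + 1 => ((sseq t d n).1 * t + (sseq t d n).2, -d * (sseq t d n).1)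

lemma sseq_pos {t d : ℤ} (hd : d = 1 ∨ d = -1) (ht : 1 ≤ t) (h3 : d = 1 → 3 ≤ t) :
    ∀ n, 0 ≤ (sseq t d n).1 ∧ (sseq t d n).1 ≤ (sseq t d (n+1)).1 ∧ 1 ≤ (sseq t d (n+1)).1 := by
  intro n
  induction n with
  | zero => simp [sseq]
  | succ n ih =>
    obtain ⟨h1, h2, h4⟩ := ih
    have hrec : (sseq t d (n+1+1)).1 = t * (sseq t d (n+1)).1 - d * (sseq t d n).1 := by
      show ((sseq t d (n+1)).1 * t + (sseq t d (n+1)).2) = _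
      show ((sseq t d n).1 * t + (sseq t d n).2) * t + (-d * (sseq t d n).1) = _
      show _ = t * ((sseq t d n).1 * t + (sseq t d n).2) - d * (sseq t d n).1
      ring
    have hstep : (sseq t d (n+1)).1 ≤ (sseq t d (n+1+1)).1 := by
      rw [hrec]
      rcases hd with rfl | rfl
      · have := h3 rfl; nlinarith
      · nlinarith
    exact ⟨by omega, hstep, by omega⟩

lemma Aword_flatten_replicate (m : ℕ) (t : List ℕ) :
    ((Aword ((List.replicate m t).flatten)).map (Int.cast : ℤ → ℂ))
      = ((Aword t).map (Int.cast : ℤ → ℂ)) ^ m := by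
  induction m with
  | zero =>
    simp only [List.replicate_zero, List.flatten_nil, Aword_nil, pow_zero]
    exact Matrix.map_one _ Int.cast_zero Int.cast_one
  | succ m ih =>
    rw [List.replicate_succ, List.flatten_cons, Aword_append, pow_succ']
    rw [← ih]
    rw [show (Int.cast : ℤ → ℂ) = ⇑(Int.castRingHom ℂ) from rfl, Matrix.map_mul]

lemma pow_mulVec_decomp (N : Matrix (Fin 2) (Fin 2) ℂ) (t d : ℤ)
    (hN2 : N * N = ((t : ℤ) : ℂ) • N - ((d : ℤ) : ℂ) • 1) (z : Fin 2 → ℂ) :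
    ∀ m, (N ^ m).mulVec z
      = (((sseq t d m).1 : ℂ)) • N.mulVec z + (((sseq t d m).2 : ℂ)) • z := by
  intro m
  induction m with
  | zero => simp [sseq]
  | succ m ih =>
    have hNN : N.mulVec (N.mulVec z) = ((t:ℂ)) • N.mulVec z - ((d:ℂ)) • z := by
      rw [Matrix.mulVec_mulVec, hN2, Matrix.sub_mulVec, Matrix.smul_mulVec,
        Matrix.smul_mulVec, Matrix.one_mulVec]
    rw [pow_succ', ← Matrix.mulVec_mulVec, ih, Matrix.mulVec_add, Matrix.mulVec_smul,
      Matrix.mulVec_smul, hNN]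
    show _ = ((((sseq t d m).1 * t + (sseq t d m).2 : ℤ)) : ℂ) • N.mulVec z
        + (((-d * (sseq t d m).1 : ℤ)) : ℂ) • z
    push_cast
    module

lemma eig_pow {w : List ℕ} (hw : w ≠ []) (hpos : ∀ b ∈ w, 1 ≤ b) (m : ℕ) (hm : 1 ≤ m)
    (z : Fin 2 → ℂ) (l : ℂ)
    (h : ((((Aword w).map (Int.cast : ℤ → ℂ)) ^ m)).mulVec z = l • z) :
    ∃ l' : ℂ, ((Aword w).map (Int.cast : ℤ → ℂ)).mulVec z = l' • z := by
  by_contra hno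
  push_neg at hno
  obtain ⟨htd, htr, h3⟩ := AwordTD hw hpos
  set N := (Aword w).map (Int.cast : ℤ → ℂ) with hN
  set t := Aword w 0 0 + Aword w 1 1 with ht
  set d := (Aword w).det with hdd
  have hN2 : N * N = ((t : ℤ) : ℂ) • N - ((d : ℤ) : ℂ) • 1 := by
    rw [cayley2 N]
    have e1 : N 0 0 + N 1 1 = ((t : ℤ) : ℂ) := by
      simp [hN, Matrix.map_apply, ht]
    have e2 : N.det = ((d : ℤ) : ℂ) := by
      simp [hN, hdd, Matrix.det_fin_two, Matrix.map_apply]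
    rw [e1, e2]
  have hdec := pow_mulVec_decomp N t d hN2 z m
  rw [h] at hdec
  have hs1 : (1:ℤ) ≤ (sseq t d m).1 := by
    obtain ⟨-, -, h4⟩ := sseq_pos htd htr h3 (m - 1)
    have : m - 1 + 1 = m := by omega
    rwa [this] at h4
  have hs0 : (((sseq t d m).1 : ℂ)) ≠ 0 := by
    exact_mod_cast (by omega : (sseq t d m).1 ≠ 0)
  apply hno ((((sseq t d m).1 : ℂ))⁻¹ * (l - ((sseq t d m).2 : ℂ)))
  have hkey : ((sseq t d m).1 : ℂ) • N.mulVec z = (l - ((sseq t d m).2 : ℂ)) • z := by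
    rw [sub_smul, hdec]
    try module
  calc N.mulVec z
      = (((sseq t d m).1 : ℂ))⁻¹ • (((sseq t d m).1 : ℂ) • N.mulVec z) := by
        rw [smul_smul, inv_mul_cancel₀ hs0, one_smul]
    _ = (((sseq t d m).1 : ℂ))⁻¹ • ((l - ((sseq t d m).2 : ℂ)) • z) := by rw [hkey]
    _ = ((((sseq t d m).1 : ℂ))⁻¹ * (l - ((sseq t d m).2 : ℂ))) • z := by
        rw [smul_smul]

/-- if `A_u` and `A_v` share a complex eigenvector `z` then `u` and `v`
are powers of a common word `t` and `z` is an eigenvector of `A_t`. -/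
theorem stmt_17 (u v : List ℕ) (hu : u ≠ []) (hv : v ≠ [])
    (hupos : ∀ b ∈ u, 1 ≤ b) (hvpos : ∀ b ∈ v, 1 ≤ b)
    (z : Fin 2 → ℂ) (hz : z ≠ 0)
    (hzu : ∃ l : ℂ, Matrix.mulVec ((Aword u).map (Int.cast : ℤ → ℂ)) z = l • z)
    (hzv : ∃ l : ℂ, Matrix.mulVec ((Aword v).map (Int.cast : ℤ → ℂ)) z = l • z) :
    ∃ (t : List ℕ) (m₁ m₂ : ℕ), 1 ≤ m₁ ∧ 1 ≤ m₂ ∧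
      u = (List.replicate m₁ t).flatten ∧ v = (List.replicate m₂ t).flatten ∧
      ∃ l : ℂ, Matrix.mulVec ((Aword t).map (Int.cast : ℤ → ℂ)) z = l • z := by
  obtain ⟨lu, hlu⟩ := hzu
  obtain ⟨lv, hlv⟩ := hzv
  set MU := (Aword u).map (Int.cast : ℤ → ℂ) with hMU
  set MV := (Aword v).map (Int.cast : ℤ → ℂ) with hMV
  set B : Matrix (Fin 2) (Fin 2) ℤ := Aword u * Aword v - Aword v * Aword u with hB
  have hBmap : B.map (Int.cast : ℤ → ℂ) = MU * MV - MV * MU := by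
    ext i j
    simp [hB, Matrix.map_apply, Matrix.sub_apply, Matrix.mul_apply, Fin.sum_univ_two,
      hMU, hMV]
    try push_cast
    try ring
  have hBc : (B.map (Int.cast : ℤ → ℂ)).mulVec z = 0 := by
    rw [hBmap, Matrix.sub_mulVec, ← Matrix.mulVec_mulVec, ← Matrix.mulVec_mulVec,
      hlv, hlu, Matrix.mulVec_smul, Matrix.mulVec_smul, hlu, hlv, smul_smul, smul_smul,
      mul_comm, sub_self]
  have hB0 : B = 0 := by
    by_contra hB0
    obtain ⟨i, hrow⟩ : ∃ i, ¬(B i 0 = 0 ∧ B i 1 = 0) := by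
      by_contra hall
      push_neg at hall
      apply hB0
      ext i j
      fin_cases j
      · simpa using (hall i).1
      · simpa using (hall i).2
    set x := B i 0 with hx'
    set y := B i 1 with hy'
    have heq : (x:ℂ) * z 0 + (y:ℂ) * z 1 = 0 := by
      have hcf := congrFun hBc i
      simpa [Matrix.mulVec, dotProduct, Fin.sum_univ_two, Matrix.map_apply,
        hx', hy'] using hcf
    set q : Fin 2 → ℤ := ![-y, x] with hqdef
    have hq : q ≠ 0 := by
      intro h0
      apply hrow
      have e0 := congrFun h0 0
      have e1 := congrFun h0 1
      simp [hqdef] at e0 e1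
      exact ⟨e1, e0⟩
    obtain ⟨s, hs0, hsz⟩ : ∃ s : ℂ, s ≠ 0 ∧ z = s • (fun j => ((q j : ℤ) : ℂ)) := by
      rcases eq_or_ne x 0 with hx0 | hx0
      · have hy0 : y ≠ 0 := fun h => hrow ⟨hx0, h⟩
        have hz1 : z 1 = 0 := by
          have hmul : (y:ℂ) * z 1 = 0 := by rw [hx0] at heq; simpa using heq
          rcases mul_eq_zero.mp hmul with h | h
          · exact absurd (by exact_mod_cast h) hy0
          · exact h
        have hz0 : z 0 ≠ 0 := by
          intro h0
          apply hz
          funext j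
          fin_cases j
          · exact h0
          · exact hz1
        refine ⟨-(z 0) / (y:ℂ), ?_, ?_⟩
        · have : ((y:ℤ):ℂ) ≠ 0 := by exact_mod_cast hy0
          simp [div_eq_zero_iff, this, hz0]
        · funext j
          fin_cases j
          · have : ((y:ℤ):ℂ) ≠ 0 := by exact_mod_cast hy0
            simp [hqdef]
            field_simp
          · simp [hqdef, hz1, hx0]
      · have hz1 : z 1 ≠ 0 := by
          intro h1
          have hmul : (x:ℂ) * z 0 = 0 := by rw [h1] at heq; simpa using heq
          rcases mul_eq_zero.mp hmul with h | h
          · exact hx0 (by exact_mod_cast h)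
          · apply hz
            funext j
            fin_cases j
            · exact h
            · exact h1
        refine ⟨z 1 / (x:ℂ), ?_, ?_⟩
        · have : ((x:ℤ):ℂ) ≠ 0 := by exact_mod_cast hx0
          simp [div_eq_zero_iff, this, hz1]
        · have hxC : ((x:ℤ):ℂ) ≠ 0 := by exact_mod_cast hx0
          funext j
          fin_cases j
          · have hgoal : z 0 = (z 1 / (x:ℂ)) * (-(y:ℂ)) := by
              rw [div_mul_eq_mul_div, eq_div_iff hxC]
              linear_combination heq
            simpa [hqdef] using hgoal
          · have hgoal : z 1 = (z 1 / (x:ℂ)) * (x:ℂ) := by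
              field_simp
            simpa [hqdef] using hgoal
    have hqc : MU.mulVec (fun j => ((q j : ℤ) : ℂ)) = lu • (fun j => ((q j : ℤ) : ℂ)) := by
      have h1 : MU.mulVec z = lu • z := hlu
      rw [hsz] at h1
      rw [Matrix.mulVec_smul] at h1
      have h2 : s • MU.mulVec (fun j => ((q j : ℤ) : ℂ))
          = s • (lu • (fun j => ((q j : ℤ) : ℂ))) := by
        rw [h1, smul_comm]
      exact smul_right_injective _ hs0 h2
    exact no_int_eigvec hu hupos q hq lu hqc
  have hcomm : Aword u * Aword v = Aword v * Aword u := sub_eq_zero.mp hB0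
  have huv : u ++ v = v ++ u := by
    apply Aword_inj (u ++ v) (v ++ u)
    · intro b hb
      rcases List.mem_append.mp hb with h | h
      · exact hupos b h
      · exact hvpos b h
    · intro b hb
      rcases List.mem_append.mp hb with h | h
      · exact hvpos b h
      · exact hupos b h
    · simp [Nat.add_comm]
    · rw [Aword_append, Aword_append, hcomm]
  obtain ⟨t, k1, k2, h1, h2⟩ := comm_words (u.length + v.length) u v le_rfl huv
  have hk1 : 1 ≤ k1 := by
    rcases Nat.eq_zero_or_pos k1 with h | h
    · exfalso; apply hu; rw [h1, h]; simp
    · exact h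
  have hk2 : 1 ≤ k2 := by
    rcases Nat.eq_zero_or_pos k2 with h | h
    · exfalso; apply hv; rw [h2, h]; simp
    · exact h
  have htne : t ≠ [] := by
    intro h
    apply hu
    rw [h1, h]
    simp
  have htpos : ∀ b ∈ t, 1 ≤ b := by
    intro b hb
    apply hupos
    rw [h1]
    exact List.mem_flatten.mpr ⟨t, List.mem_replicate.mpr ⟨by omega, rfl⟩, hb⟩
  refine ⟨t, k1, k2, hk1, hk2, h1, h2, ?_⟩
  apply eig_pow htne htpos k1 hk1 z lu
  rw [← Aword_flatten_replicate, ← h1]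
  exact hlu
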